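/- Let C(t) be a T-periodic Lipschitz moving closed convex set and X the set of T-periodic solutions of the sweeping process -x' ∈ N_{C(t)}(x). Then X is a convex subset of C(ℝ, E): if x, y ∈ X and θ ∈ (0,1), then t ↦ θx(t) + (1−θ)y(t) is also a T-periodic solution. -/

import Mathlib

open MeasureTheory InnerProductSpace

/-- The normal cone of convex analysis: empty outside `C`. -/
def normalCone {E : Type*} [NormedAddCommGroup E] [InnerProductSpace ℝ E]
    (C : Set E) (x : E) : Set E :=
  {ζ | x ∈ C ∧ ∀ c ∈ C, ⟪ζ, c - x⟫_ℝ ≤ 0}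

/-- A solution of the sweeping process `-x'(t) ∈ N_{C(t)}(x(t))`: a Lipschitz
function satisfying the differential inclusion a.e. -/
def IsSweepingSolution {E : Type*} [NormedAddCommGroup E] [InnerProductSpace ℝ E]
    (C : ℝ → Set E) (x : ℝ → E) : Prop :=
  (∃ K : NNReal, LipschitzWith K x) ∧ (∀ t, x t ∈ C t) ∧
    ∀ᵐ t ∂(volume : Measure ℝ), ∃ v : E, HasDerivAt x v t ∧ -v ∈ normalCone (C t) (x t)


lemma ae_of_ae_Ioc_of_periodic {Q : ℝ → Prop} {T : ℝ} (hT : 0 < T)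
    (hQper : ∀ t, Q (t + T) ↔ Q t)
    (h : ∀ᵐ t ∂(volume.restrict (Set.Ioc 0 T)), Q t) :
    ∀ᵐ t ∂(volume : Measure ℝ), Q t := by
  have key : ∀ (n : ℤ) (t : ℝ), Q (t + n * T) ↔ Q t := by
    intro n
    induction n using Int.induction_on with
    | zero => simp
    | succ k ih =>
        intro t
        have h1 := hQper (t + (k : ℝ) * T)
        have h2 := ih t
        have e : t + ((k : ℤ) + 1 : ℤ) * T = t + (k : ℝ) * T + T := by push_cast; ring
        rw [e]
        tauto
    | pred k ih =>
        intro t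
        have h1 := hQper (t + (-(k : ℤ) - 1 : ℤ) * T)
        have h2 := ih t
        have e : t + ((-(k : ℤ) - 1 : ℤ) : ℝ) * T + T = t + ((-(k : ℤ) : ℤ) : ℝ) * T := by
          push_cast; ring
        rw [e] at h1
        push_cast at h1 h2 ⊢
        tauto
  have hA0 : volume ({t | ¬ Q t} ∩ Set.Ioc 0 T) = 0 := by
    have := h
    rw [ae_iff, Measure.restrict_apply' measurableSet_Ioc] at this
    exact this
  rw [ae_iff]
  have hsub : {t | ¬ Q t} ⊆ ⋃ n : ℤ,
      (fun s : ℝ => s + (-((n : ℝ) * T))) ⁻¹' ({t | ¬ Q t} ∩ Set.Ioc 0 T) := by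
    intro t ht
    set n : ℤ := ⌈t / T⌉ - 1 with hn
    refine Set.mem_iUnion.2 ⟨n, ⟨?_, ?_, ?_⟩⟩
    · intro hq
      apply ht
      have := (key n (t + -((n : ℝ) * T))).mpr hq
      rwa [show t + -((n : ℝ) * T) + (n : ℝ) * T = t from by ring] at this
    · have h1 : ((n : ℝ)) < t / T := by
        have := Int.ceil_lt_add_one (t / T)
        have : ((⌈t / T⌉ : ℝ)) < t / T + 1 := by exact_mod_cast this
        simp only [hn]
        push_cast
        linarith
      have h1' := (lt_div_iff₀ hT).mp h1
      show 0 < t + -((n : ℝ) * T)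
      linarith
    · have h2 : t / T ≤ (n : ℝ) + 1 := by
        have := Int.le_ceil (t / T)
        simp only [hn]
        push_cast
        linarith [Int.le_ceil (t / T)]
      have h2' := (div_le_iff₀ hT).mp h2
      show t + -((n : ℝ) * T) ≤ T
      linarith
  refine measure_mono_null hsub ?_
  refine measure_iUnion_null fun n => ?_
  rw [measure_preimage_add_right]
  exact hA0


lemma deriv_zero_of_periodic {f : ℝ → ℝ} {K T : ℝ} (hT : 0 < T)
    (hmono : Monotone (fun t => K * t - f t)) (hcont : Continuous f)
    (hfT : f T = f 0)
    (hd : ∀ᵐ t ∂(volume : Measure ℝ), ∃ d, d ≤ 0 ∧ HasDerivAt f d t) :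
    ∀ᵐ t ∂(volume.restrict (Set.Ioc 0 T)), ∀ d, HasDerivAt f d t → d = 0 := by
  set g : ℝ → ℝ := fun t => K * t - f t with hg
  have hgc : Continuous g := (continuous_const.mul continuous_id).sub hcont
  set S : StieltjesFunction ℝ := ⟨g, hmono, fun x => hgc.continuousAt.continuousWithinAt⟩ with hS
  set r : ℝ → ℝ := fun t => (Measure.rnDeriv S.measure volume t).toReal with hr
  have hSd := S.ae_hasDerivAt
  have hSg : (S : ℝ → ℝ) = g := rfl
  have hrK : ∀ᵐ t ∂(volume : Measure ℝ), K ≤ r t ∧ HasDerivAt g (r t) t := by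
    filter_upwards [hSd, hd] with t h1 h2
    obtain ⟨d, hd0, hdf⟩ := h2
    have h3 : HasDerivAt g (K - d) t := by
      have h := ((hasDerivAt_id t).const_mul K).sub hdf; rw [mul_one] at h; exact h
    have h4 : r t = K - d := h1.unique h3
    exact ⟨by rw [h4]; linarith, h1⟩
  have hKT : 0 ≤ K * T := by
    have h8 := hmono hT.le
    simp only [hg] at h8
    have : K * 0 - f 0 ≤ K * T - f T := h8
    rw [hfT] at this; linarith
  have hmeasIoc : S.measure (Set.Ioc 0 T) = ENNReal.ofReal (K * T) := by
    rw [S.measure_Ioc]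
    congr 1
    show K * T - f T - (K * 0 - f 0) = K * T
    rw [hfT]; ring
  have hne : S.measure (Set.Ioc 0 T) ≠ ⊤ := by rw [hmeasIoc]; exact ENNReal.ofReal_ne_top
  have hint : IntegrableOn r (Set.Ioc 0 T) volume :=
    Measure.integrableOn_toReal_rnDeriv hne
  have hle : ∫ t in Set.Ioc 0 T, r t ≤ K * T := by
    have h5 := Measure.setIntegral_toReal_rnDeriv_le (μ := S.measure) (ν := volume) hne
    rw [measureReal_def, hmeasIoc, ENNReal.toReal_ofReal hKT] at h5
    exact h5
  have hiK : IntegrableOn (fun _ : ℝ => K) (Set.Ioc 0 T) volume :=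
    integrableOn_const measure_Ioc_lt_top.ne
  have hKr' : ∀ᵐ t ∂(volume.restrict (Set.Ioc 0 T)), K ≤ r t :=
    ae_restrict_of_ae (hrK.mono fun t h => h.1)
  have hintK : ∫ _ in Set.Ioc 0 T, K = K * T := by
    rw [setIntegral_const]
    simp [Real.volume_Ioc, ENNReal.toReal_ofReal hT.le]
    rw [max_eq_left hT.le]; ring
  have hzero : ∀ᵐ t ∂(volume.restrict (Set.Ioc 0 T)), r t - K = 0 := by
    have hnn : 0 ≤ᵐ[volume.restrict (Set.Ioc 0 T)] fun t => r t - K :=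
      hKr'.mono fun t h => by simp [h]
    have hintsub : Integrable (fun t => r t - K) (volume.restrict (Set.Ioc 0 T)) :=
      hint.sub hiK
    have h6 : ∫ t in Set.Ioc 0 T, (r t - K) = 0 := by
      have := integral_sub hint hiK
      have h7 : 0 ≤ ∫ t in Set.Ioc 0 T, (r t - K) :=
        integral_nonneg_of_ae hnn
      rw [this, hintK] at *
      linarith [hle, h7, this ▸ h7]
    have := (integral_eq_zero_iff_of_nonneg_ae hnn hintsub).mp h6
    filter_upwards [this] with t ht using ht
  filter_upwards [hzero, ae_restrict_of_ae hrK] with t h1 h2 d hdf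
  have h3 : HasDerivAt g (K - d) t := by
    have h := ((hasDerivAt_id t).const_mul K).sub hdf; rw [mul_one] at h; exact h
  have h4 : r t = K - d := h2.2.unique h3
  have : r t = K := by linarith
  linarith [h4, this]


lemma hasDerivAt_of_periodic_pt {E : Type*} [NormedAddCommGroup E] [NormedSpace ℝ E]
    {g : ℝ → E} {T : ℝ} (hg : ∀ s, g (s + T) = g s) {a : E} {t : ℝ} :
    HasDerivAt g a (t + T) ↔ HasDerivAt g a t := by
  constructor
  · intro H
    have h1 : HasDerivAt (fun s : ℝ => s + T) (1 : ℝ) t := (hasDerivAt_id t).add_const T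
    have h2 := H.scomp t h1
    simp only [one_smul] at h2
    have : (g ∘ fun s : ℝ => s + T) = g := funext fun s => hg s
    rwa [this] at h2
  · intro H
    have h1 : HasDerivAt (fun s : ℝ => s - T) (1 : ℝ) (t + T) := (hasDerivAt_id _).sub_const T
    have h0 : (fun s : ℝ => s - T) (t + T) = t := by simp
    have h2 := (h0 ▸ H).scomp (t + T) h1
    simp only [one_smul] at h2
    have : (g ∘ fun s : ℝ => s - T) = g := funext fun s => by
      simpa using (hg (s - T)).symm
    rwa [this] at h2

theorem stmt_4 {E : Type*} [NormedAddCommGroup E] [InnerProductSpace ℝ E]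
    [FiniteDimensional ℝ E]
    (T : ℝ) (hT : 0 < T) (C : ℝ → Set E)
    (hper : ∀ t, C (t + T) = C t)
    (hne : ∀ t, (C t).Nonempty) (hcl : ∀ t, IsClosed (C t)) (hcv : ∀ t, Convex ℝ (C t))
    (L : ℝ) (hL : 0 ≤ L)
    (hLip : ∀ s t : ℝ, Metric.hausdorffDist (C s) (C t) ≤ L * |s - t|)
    (x y : ℝ → E) (hx : IsSweepingSolution C x) (hy : IsSweepingSolution C y)
    (hxT : ∀ t, x (t + T) = x t) (hyT : ∀ t, y (t + T) = y t)
    (θ : ℝ) (hθ : θ ∈ Set.Ioo (0:ℝ) 1) :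
    IsSweepingSolution C (fun t => θ • x t + (1 - θ) • y t) ∧
      (∀ t, θ • x (t + T) + (1 - θ) • y (t + T) = θ • x t + (1 - θ) • y t) := by
  obtain ⟨hθ1, hθ2⟩ := hθ
  obtain ⟨⟨Kx, hKx⟩, hxC, hxae⟩ := hx
  obtain ⟨⟨Ky, hKy⟩, hyC, hyae⟩ := hy
  refine ⟨⟨⟨‖θ‖₊ * Kx + ‖(1 - θ)‖₊ * Ky,
      ((lipschitzWith_smul θ).comp hKx).add ((lipschitzWith_smul (1 - θ)).comp hKy)⟩,
      fun t => hcv t (hxC t) (hyC t) hθ1.le (by linarith) (by ring), ?_⟩,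
      fun t => by rw [hxT, hyT]⟩
  -- the a.e. differential inclusion
  set u : ℝ → E := fun t => x t - y t with hu
  have huT : Function.Periodic u T := fun t => by simp only [hu, hxT, hyT]
  have hulip : LipschitzWith (Kx + Ky) u := hKx.sub hKy
  obtain ⟨M, hM⟩ := (isCompact_Icc (a := (0:ℝ)) (b := T)).exists_bound_of_continuousOn
      hulip.continuous.continuousOn
  have hM0 : 0 ≤ M := le_trans (norm_nonneg _) (hM 0 ⟨le_rfl, hT.le⟩)
  have hMa : ∀ t, ‖u t‖ ≤ M := by
    intro t
    have hfl1 : (⌊t / T⌋ : ℝ) * T ≤ t := by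
      have := (le_div_iff₀ hT).mp (Int.floor_le (t / T))
      linarith
    have hfl2 : t < ((⌊t / T⌋ : ℝ) + 1) * T := by
      have h2 : t / T < (⌊t / T⌋ : ℝ) + 1 := by exact_mod_cast Int.lt_floor_add_one (t / T)
      have := (div_lt_iff₀ hT).mp h2
      linarith
    have h3 : u (t - (⌊t / T⌋ : ℤ) • T) = u t := (huT.zsmul ⌊t / T⌋).sub_eq t
    have h4 : u (t - (⌊t / T⌋ : ℝ) * T) = u t := by
      rw [← h3]; norm_num [zsmul_eq_mul]
    rw [← h4]
    exact hM _ ⟨by linarith, by nlinarith⟩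
  set f : ℝ → ℝ := fun t => ⟪u t, u t⟫_ℝ with hf
  set K : ℝ := 2 * M * ((Kx : ℝ) + (Ky : ℝ)) with hK
  have hmono : Monotone (fun t => K * t - f t) := by
    intro s t hst
    simp only
    have hid : f t - f s = ⟪u t - u s, u t + u s⟫_ℝ := by
      have hexp : ⟪u t - u s, u t + u s⟫_ℝ = ⟪u t, u t⟫_ℝ - ⟪u s, u s⟫_ℝ := by
        rw [inner_sub_left, inner_add_right, inner_add_right, real_inner_comm (u s) (u t)]
        ring
      rw [hexp]
    have hb1 : ‖u t - u s‖ ≤ ((Kx : ℝ) + (Ky : ℝ)) * (t - s) := by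
      have := hulip.dist_le_mul t s
      rw [dist_eq_norm, Real.dist_eq, abs_of_nonneg (by linarith : (0:ℝ) ≤ t - s)] at this
      push_cast at this ⊢
      linarith
    have hb2 : ‖u t + u s‖ ≤ 2 * M :=
      le_trans (norm_add_le _ _) (by linarith [hMa t, hMa s])
    have hineq : f t - f s ≤ K * (t - s) := by
      rw [hid]
      calc ⟪u t - u s, u t + u s⟫_ℝ ≤ ‖u t - u s‖ * ‖u t + u s‖ := real_inner_le_norm _ _
        _ ≤ (((Kx : ℝ) + (Ky : ℝ)) * (t - s)) * (2 * M) := by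
            exact mul_le_mul hb1 hb2 (norm_nonneg _)
              (mul_nonneg (by positivity) (by linarith))
        _ = K * (t - s) := by rw [hK]; ring
    linarith
  have hcontf : Continuous f := (hulip.continuous.inner hulip.continuous)
  have hfT : f T = f 0 := by
    have := huT 0
    simp only [zero_add] at this
    simp only [hf, this]
  have hd : ∀ᵐ t ∂(volume : Measure ℝ), ∃ d, d ≤ 0 ∧ HasDerivAt f d t := by
    filter_upwards [hxae, hyae] with t h1 h2
    obtain ⟨v, hv, hvmem⟩ := h1
    obtain ⟨w, hw, hwmem⟩ := h2
    have hderu : HasDerivAt u (v - w) t := hv.sub hw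
    refine ⟨⟪u t, v - w⟫_ℝ + ⟪v - w, u t⟫_ℝ, ?_, hderu.inner ℝ hderu⟩
    have a1 : ⟪-v, y t - x t⟫_ℝ ≤ 0 := hvmem.2 (y t) (hyC t)
    have a2 : ⟪-w, x t - y t⟫_ℝ ≤ 0 := hwmem.2 (x t) (hxC t)
    have e1 : ⟪v - w, u t⟫_ℝ = ⟪-v, y t - x t⟫_ℝ + ⟪-w, x t - y t⟫_ℝ := by
      simp only [hu, inner_neg_left, inner_sub_left, inner_sub_right]
      ring
    have e2 : ⟪u t, v - w⟫_ℝ = ⟪v - w, u t⟫_ℝ := real_inner_comm _ _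
    rw [e1, e2]
    linarith
  have hrestr := deriv_zero_of_periodic hT hmono hcontf hfT hd
  set Q : ℝ → Prop := fun t => ∃ a : E,
      HasDerivAt (fun s => θ • x s + (1 - θ) • y s) a t ∧
        -a ∈ normalCone (C t) (θ • x t + (1 - θ) • y t) with hQ
  have hQper : ∀ t, Q (t + T) ↔ Q t := by
    intro t
    have hzT : ∀ s, θ • x (s + T) + (1 - θ) • y (s + T) = θ • x s + (1 - θ) • y s :=
      fun s => by rw [hxT, hyT]
    simp only [hQ]
    constructor
    · rintro ⟨a, ha, hmem⟩
      exact ⟨a, (hasDerivAt_of_periodic_pt hzT).mp ha, by rwa [hper, hzT t] at hmem⟩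
    · rintro ⟨a, ha, hmem⟩
      exact ⟨a, (hasDerivAt_of_periodic_pt hzT).mpr ha, by rwa [hper, hzT t]⟩
  refine ae_of_ae_Ioc_of_periodic hT hQper ?_
  filter_upwards [hrestr, ae_restrict_of_ae hxae, ae_restrict_of_ae hyae] with t h0 h1 h2
  obtain ⟨v, hv, hvmem⟩ := h1
  obtain ⟨w, hw, hwmem⟩ := h2
  have hderu : HasDerivAt u (v - w) t := hv.sub hw
  have hdf : HasDerivAt f (⟪u t, v - w⟫_ℝ + ⟪v - w, u t⟫_ℝ) t := hderu.inner ℝ hderu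
  have hzero0 : ⟪u t, v - w⟫_ℝ + ⟪v - w, u t⟫_ℝ = 0 := h0 _ hdf
  have hzero : ⟪v - w, x t - y t⟫_ℝ = 0 := by
    have := real_inner_comm (u t) (v - w)
    simp only [hu] at hzero0 this
    linarith
  refine ⟨θ • v + (1 - θ) • w, (hv.const_smul θ).add (hw.const_smul (1 - θ)),
      hcv t (hxC t) (hyC t) hθ1.le (by linarith) (by ring), ?_⟩
  intro c hc
  have key : ⟪-(θ • v + (1 - θ) • w), c - (θ • x t + (1 - θ) • y t)⟫_ℝ
      = θ * ⟪-v, c - x t⟫_ℝ + (1 - θ) * ⟪-w, c - y t⟫_ℝ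
        - (θ * (1 - θ)) * ⟪v - w, x t - y t⟫_ℝ := by
    simp only [inner_neg_left, inner_add_left, inner_add_right, inner_sub_left,
      inner_sub_right, real_inner_smul_left, real_inner_smul_right]
    ring
  have a1 : ⟪-v, c - x t⟫_ℝ ≤ 0 := hvmem.2 c hc
  have a2 : ⟪-w, c - y t⟫_ℝ ≤ 0 := hwmem.2 c hc
  rw [key, hzero]
  nlinarith [mul_nonneg hθ1.le (neg_nonneg.mpr a1),
    mul_nonneg (by linarith : (0:ℝ) ≤ 1 - θ) (neg_nonneg.mpr a2)]
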